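/- Let F = [[0,−1],[1,0]]. Let a(x) = [A(x), B(x)]ᵀ, x ∈ ℕ, be a sequence of 2×1 real vectors with ∑_{x≥0} ‖a(x)‖² < ∞, and for x ≠ y define K(x,y) = (A(x)B(y) − A(y)B(x))/(x−y). Suppose a(x+1) = (Lx + M) a(x) for all x ∈ ℕ, where L and M are constant 2×2 real matrices with det L = 0, det M = 1, and such that MᵀFL is symmetric with eigenvalues λ ∈ ℝ∖{0} and 0. Let [α,β]ᵀ be a real unit eigenvector of MᵀFL for the eigenvalue λ. Then, setting φ(x) = |λ|^{1/2}(α A(x) + β B(x)), one has (φ(x)) ∈ ℓ² and K(x,y) = −sgn(λ) ∑_{k=0}^∞ φ(x+k) φ(y+k) for all x,y ∈ ℕ with x ≠ y. -/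

import Mathlib

open Matrix Filter

lemma aux_rank1 (p q r lam a b : ℝ) (hlam : lam ≠ 0)
    (h1 : p*a + q*b = lam*a) (h2 : q*a + r*b = lam*b)
    (h3 : p*r - q*q = 0) (h4 : a^2 + b^2 = 1) :
    p = lam*a^2 ∧ q = lam*(a*b) ∧ r = lam*b^2 := by
  have hα : ((p-lam)*(r-lam) - q*q)*a = 0 := by linear_combination (r-lam)*h1 - q*h2
  have hβ : ((p-lam)*(r-lam) - q*q)*b = 0 := by linear_combination (p-lam)*h2 - q*h1
  have hd : (p-lam)*(r-lam) - q*q = 0 := by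
    linear_combination a*hα + b*hβ - ((p-lam)*(r-lam) - q*q)*h4
  have h5 : lam*(p+r) = lam*lam := by linear_combination h3 - hd
  have htr : p + r = lam := mul_left_cancel₀ hlam h5
  have hq1 : q*b = r*a := by linear_combination h1 - a*htr
  have hq2 : q*a = p*b := by linear_combination h2 - b*htr
  refine ⟨?_, ?_, ?_⟩
  · linear_combination a*h1 - b*hq2 - p*h4
  · linear_combination b*h1 + a*hq2 - q*h4
  · linear_combination b*h2 - a*hq1 - r*h4

lemma aux_key (L00 L01 L10 L11 M00 M01 M10 M11 lam a b Ax Bx Ay By x y : ℝ)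
    (hdL : L00*L11 - L01*L10 = 0) (hdM : M00*M11 - M01*M10 = 1)
    (hS00 : M10*L00 - M00*L10 = lam*a^2)
    (hS01 : M10*L01 - M00*L11 = lam*(a*b))
    (hS10 : M11*L00 - M01*L10 = lam*(a*b))
    (hS11 : M11*L01 - M01*L11 = lam*b^2) :
    ((x*L00+M00)*Ax + (x*L01+M01)*Bx) * ((y*L10+M10)*Ay + (y*L11+M11)*By)
    - ((y*L00+M00)*Ay + (y*L01+M01)*By) * ((x*L10+M10)*Ax + (x*L11+M11)*Bx)
    - (Ax*By - Ay*Bx) = (x - y) * (lam * ((a*Ax + b*Bx) * (a*Ay + b*By))) := by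
  linear_combination (x*y)*(By*Ax - Ay*Bx)*hdL + (By*Ax - Ay*Bx)*hdM
    + (x-y)*(Ax*Ay)*hS00 + (x*(Ay*Bx) - y*(By*Ax))*hS01
    + (x*(By*Ax) - y*(Ay*Bx))*hS10 + (x-y)*(Bx*By)*hS11

set_option maxHeartbeats 2000000 in
/-- Corollary 5 of the paper: if `a(x+1) = (Lx + M)a(x)` where `det L = 0`, `det M = 1` and
`MᵀFL` is symmetric with eigenvalues `λ ≠ 0` and `0`, then the Tracy–Widom kernel built from
`a(x) = [A(x),B(x)]ᵀ` is (up to sign) the square of the Hankel matrix with symbol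
`φ(x) = |λ|^{1/2}(α A(x) + β B(x))`. -/
theorem stmt_5 (A B : ℕ → ℝ)
    (ha : Summable fun x : ℕ => (A x) ^ 2 + (B x) ^ 2)
    (K : ℕ → ℕ → ℝ)
    (hK : ∀ x y : ℕ, x ≠ y → K x y = (A x * B y - A y * B x) / ((x : ℝ) - y))
    (L M : Matrix (Fin 2) (Fin 2) ℝ)
    (hrec : ∀ x : ℕ, ![A (x + 1), B (x + 1)] = ((x : ℝ) • L + M).mulVec ![A x, B x])
    (hL : L.det = 0) (hM : M.det = 1)
    (hsymm : (Mᵀ * !![(0 : ℝ), -1; 1, 0] * L)ᵀ = Mᵀ * !![(0 : ℝ), -1; 1, 0] * L)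
    (lam : ℝ) (hlam : lam ≠ 0)
    (hzero : ∃ v : Fin 2 → ℝ, v ≠ 0 ∧ (Mᵀ * !![(0 : ℝ), -1; 1, 0] * L).mulVec v = 0)
    (α β : ℝ) (hunit : α ^ 2 + β ^ 2 = 1)
    (heig : (Mᵀ * !![(0 : ℝ), -1; 1, 0] * L).mulVec ![α, β] = lam • ![α, β]) :
    (Summable fun x : ℕ => (Real.sqrt |lam| * (α * A x + β * B x)) ^ 2)
    ∧ ∀ x y : ℕ, x ≠ y →
        K x y = -(Real.sign lam) *
          ∑' k : ℕ, (Real.sqrt |lam| * (α * A (x + k) + β * B (x + k)))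
            * (Real.sqrt |lam| * (α * A (y + k) + β * B (y + k))) := by
  obtain ⟨s, hs⟩ : ∃ s : ℝ, s = Real.sqrt |lam| := ⟨_, rfl⟩
  have hss : s * s = |lam| := by rw [hs]; exact Real.mul_self_sqrt (abs_nonneg _)
  obtain ⟨u, hu⟩ : ∃ u : ℕ → ℝ, u = fun n => α * A n + β * B n := ⟨_, rfl⟩
  rw [← hs]
  simp only [show ∀ n, α * A n + β * B n = u n from fun n => by rw [hu]]
  -- scalar eigen equations
  have h0 := congrFun heig 0
  have h1 := congrFun heig 1
  simp [Matrix.mulVec, Matrix.mul_apply, dotProduct, Fin.sum_univ_two] at h0 h1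
  -- symmetry
  have hsym := congrFun (congrFun hsymm 0) 1
  simp [Matrix.mul_apply, Matrix.transpose_apply, Fin.sum_univ_two] at hsym
  -- determinants
  rw [Matrix.det_fin_two] at hL hM
  -- rank one decomposition
  have h1' : (M 1 0 * L 0 0 - M 0 0 * L 1 0) * α + (M 1 0 * L 0 1 - M 0 0 * L 1 1) * β
      = lam * α := by linear_combination h0
  have h2' : (M 1 0 * L 0 1 - M 0 0 * L 1 1) * α + (M 1 1 * L 0 1 - M 0 1 * L 1 1) * β
      = lam * β := by linear_combination h1 - α * hsym
  have h3' : (M 1 0 * L 0 0 - M 0 0 * L 1 0) * (M 1 1 * L 0 1 - M 0 1 * L 1 1)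
      - (M 1 0 * L 0 1 - M 0 0 * L 1 1) * (M 1 0 * L 0 1 - M 0 0 * L 1 1) = 0 := by
    linear_combination (M 0 0 * M 1 1 - M 0 1 * M 1 0) * hL
      + (M 1 0 * L 0 1 - M 0 0 * L 1 1) * hsym
  obtain ⟨hS00, hS01, hS11⟩ := aux_rank1 _ _ _ _ _ _ hlam h1' h2' h3' hunit
  have hS10 : M 1 1 * L 0 0 - M 0 1 * L 1 0 = lam * (α * β) := by
    linear_combination hS01 + hsym
  -- scalar recurrence
  have hA : ∀ n : ℕ, A (n+1) = ((n:ℝ) * L 0 0 + M 0 0) * A n + ((n:ℝ) * L 0 1 + M 0 1) * B n := by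
    intro n
    have h := congrFun (hrec n) 0
    simp [Matrix.mulVec, dotProduct, Fin.sum_univ_two, Matrix.add_apply,
      Matrix.smul_apply, smul_eq_mul] at h
    linear_combination h
  have hB : ∀ n : ℕ, B (n+1) = ((n:ℝ) * L 1 0 + M 1 0) * A n + ((n:ℝ) * L 1 1 + M 1 1) * B n := by
    intro n
    have h := congrFun (hrec n) 1
    simp [Matrix.mulVec, dotProduct, Fin.sum_univ_two, Matrix.add_apply,
      Matrix.smul_apply, smul_eq_mul] at h
    linear_combination h
  -- key recurrence for the kernel numerator
  have hkey : ∀ p q : ℕ,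
      (A (p+1) * B (q+1) - A (q+1) * B (p+1)) - (A p * B q - A q * B p)
        = ((p:ℝ) - q) * (lam * (u p * u q)) := by
    intro p q
    rw [hA p, hB p, hA q, hB q]
    simp only [hu]
    exact aux_key (L 0 0) (L 0 1) (L 1 0) (L 1 1) (M 0 0) (M 0 1) (M 1 0) (M 1 1)
      lam α β (A p) (B p) (A q) (B q) (p:ℝ) (q:ℝ) hL hM hS00 hS01 hS10 hS11
  -- summability of u^2
  have hu2 : Summable fun n : ℕ => u n ^ 2 := by
    refine ha.of_nonneg_of_le (fun n => sq_nonneg _) (fun n => ?_)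
    simp only [hu]
    nlinarith [sq_nonneg (β * A n - α * B n), hunit, sq_nonneg (A n), sq_nonneg (B n)]
  have hphi2 : Summable fun x : ℕ => (s * u x) ^ 2 := by
    have he : (fun x : ℕ => (s * u x) ^ 2) = fun x => |lam| * (u x ^ 2) := by
      funext x; rw [mul_pow, sq s, hss]
    rw [he]
    exact hu2.mul_left |lam|
  refine ⟨hphi2, fun x y hxy => ?_⟩
  -- limits
  have hA0 : Tendsto A atTop (nhds 0) := by
    rw [tendsto_zero_iff_abs_tendsto_zero]
    have hA2 : Tendsto (fun n => A n ^ 2) atTop (nhds 0) :=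
      squeeze_zero (fun n => sq_nonneg _) (fun n => le_add_of_nonneg_right (sq_nonneg _))
        ha.tendsto_atTop_zero
    simpa [Real.sqrt_sq_eq_abs, Function.comp_def] using hA2.sqrt
  have hB0 : Tendsto B atTop (nhds 0) := by
    rw [tendsto_zero_iff_abs_tendsto_zero]
    have hB2 : Tendsto (fun n => B n ^ 2) atTop (nhds 0) :=
      squeeze_zero (fun n => sq_nonneg _) (fun n => le_add_of_nonneg_left (sq_nonneg _))
        ha.tendsto_atTop_zero
    simpa [Real.sqrt_sq_eq_abs, Function.comp_def] using hB2.sqrt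
  have hshift : ∀ (f : ℕ → ℝ), Tendsto f atTop (nhds 0) → ∀ c : ℕ,
      Tendsto (fun k => f (c + k)) atTop (nhds 0) := by
    intro f hf c
    have h := hf.comp (tendsto_add_atTop_nat c)
    have he : (fun k : ℕ => f (c + k)) = f ∘ (fun k => k + c) := by
      funext k; simp [Function.comp, Nat.add_comm]
    rw [he]
    exact h
  -- the telescoping sequence
  obtain ⟨g, hg⟩ : ∃ g : ℕ → ℝ, g = fun k => A (x+k) * B (y+k) - A (y+k) * B (x+k) := ⟨_, rfl⟩
  have hg0 : Tendsto g atTop (nhds 0) := by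
    have h := ((hshift A hA0 x).mul (hshift B hB0 y)).sub ((hshift A hA0 y).mul (hshift B hB0 x))
    simp only [hg]
    simpa using h
  -- summability of the product sequence
  have hsx : Summable fun k : ℕ => u (x+k) ^ 2 := by
    have h := (summable_nat_add_iff x).mpr hu2
    have he : (fun k : ℕ => u (x+k) ^ 2) = fun k => u (k+x) ^ 2 := by
      funext k; rw [Nat.add_comm]
    rw [he]; exact h
  have hsy : Summable fun k : ℕ => u (y+k) ^ 2 := by
    have h := (summable_nat_add_iff y).mpr hu2
    have he : (fun k : ℕ => u (y+k) ^ 2) = fun k => u (k+y) ^ 2 := by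
      funext k; rw [Nat.add_comm]
    rw [he]; exact h
  have hprod : Summable fun k : ℕ => u (x+k) * u (y+k) := by
    refine Summable.of_abs ?_
    refine ((hsx.add hsy).mul_left (1/2)).of_nonneg_of_le (fun k => abs_nonneg _) (fun k => ?_)
    rw [abs_mul]
    nlinarith [sq_nonneg (|u (x+k)| - |u (y+k)|), abs_nonneg (u (x+k)), abs_nonneg (u (y+k)),
      sq_abs (u (x+k)), sq_abs (u (y+k))]
  obtain ⟨T, hT⟩ : ∃ T : ℝ, T = ∑' k : ℕ, u (x+k) * u (y+k) := ⟨_, rfl⟩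
  have hxy' : (x:ℝ) - y ≠ 0 := sub_ne_zero.mpr (by exact_mod_cast hxy)
  have hf : ∀ k : ℕ, (((x:ℝ) - y) * lam) * (u (x+k) * u (y+k)) = g (k+1) - g k := by
    intro k
    have h := hkey (x+k) (y+k)
    push_cast at h
    simp only [hg]
    have e1 : x + (k+1) = (x+k) + 1 := by omega
    have e2 : y + (k+1) = (y+k) + 1 := by omega
    rw [e1, e2]
    linear_combination -h
  have hsum : Summable fun k : ℕ => (((x:ℝ) - y) * lam) * (u (x+k) * u (y+k)) :=
    hprod.mul_left _
  have htendsto : Tendsto (fun n => ∑ k ∈ Finset.range n,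
      (((x:ℝ) - y) * lam) * (u (x+k) * u (y+k))) atTop (nhds (((x:ℝ) - y) * lam * T)) := by
    rw [hT]
    have h := hsum.hasSum.tendsto_sum_nat
    rwa [tsum_mul_left] at h
  have htel : Tendsto (fun n => ∑ k ∈ Finset.range n,
      (((x:ℝ) - y) * lam) * (u (x+k) * u (y+k))) atTop (nhds (0 - g 0)) := by
    have heq : ∀ n, ∑ k ∈ Finset.range n, (((x:ℝ) - y) * lam) * (u (x+k) * u (y+k))
        = g n - g 0 := by
      intro n
      rw [Finset.sum_congr rfl (fun k _ => hf k)]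
      exact Finset.sum_range_sub g n
    simp only [heq]
    exact hg0.sub tendsto_const_nhds
  have hval : ((x:ℝ) - y) * lam * T = - g 0 := by
    have h := tendsto_nhds_unique htendsto htel
    simpa using h
  have hnum : A x * B y - A y * B x = -(((x:ℝ) - y) * lam * T) := by
    rw [hval]; simp [hg]
  have hgoalT : ∑' k : ℕ, (s * u (x + k)) * (s * u (y + k)) = |lam| * T := by
    calc ∑' k : ℕ, (s * u (x + k)) * (s * u (y + k))
        = ∑' k : ℕ, |lam| * (u (x + k) * u (y + k)) :=
          tsum_congr (fun k => by rw [← hss]; ring)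
      _ = |lam| * ∑' k : ℕ, u (x + k) * u (y + k) := tsum_mul_left
      _ = |lam| * T := by rw [hT]
  rw [hK x y hxy, hgoalT]
  have hsgn : Real.sign lam * |lam| = lam := by
    rcases lt_or_gt_of_ne hlam with h | h
    · rw [Real.sign_of_neg h, abs_of_neg h]; ring
    · rw [Real.sign_of_pos h, abs_of_pos h]; ring
  rw [div_eq_iff hxy']
  linear_combination hnum + (((x:ℝ) - y) * T) * hsgn
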